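/- Fix λ > 0 and let (X̃, Y) be a random pair with X̃ ∈ ℝ^d bounded and Y ∈ {-1, 1}, such that for each sign s ∈ {-1,1} and each coordinate j, the conditional density of X̃_j given X̃_{-j} and Y = s exists and is bounded. Define the population SVM risk R(θ) = (λ/2)‖θ‖₂² + E[max(0, 1 - Y θ^T X̃)]. Then for θ with all coordinates nonzero, R is differentiable at θ with ∇R(θ) = λθ - E[Y · 1{Y θ^T X̃ ≤ 1} · X̃]. -/

import Mathlib

open MeasureTheory Set

lemma svm_null_aux {Ω : Type*} [MeasurableSpace Ω] (μ : Measure Ω) [IsProbabilityMeasure μ]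
    {d : ℕ} (X : Ω → EuclideanSpace ℝ (Fin d)) (hX : Measurable X) (Y : Ω → ℝ)
    {K : ℝ} (hK : 0 < K) (j : Fin d)
    (κj : ({k : Fin d // k ≠ j} → ℝ) → Measure ℝ) (s : ℝ)
    (hdis : ∀ (A : Set ({k : Fin d // k ≠ j} → ℝ)) (B : Set ℝ),
        MeasurableSet A → MeasurableSet B →
        μ {ω | Y ω = s ∧ (fun k : {k : Fin d // k ≠ j} => X ω k) ∈ A ∧ X ω j ∈ B}
          = ∫⁻ x in A, κj x B
              ∂(Measure.map (fun ω (k : {k : Fin d // k ≠ j}) => X ω k)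
                  (μ.restrict {ω | Y ω = s})))
    (hdens : ∀ x a b, a ≤ b → κj x (Set.Ioc a b) ≤ ENNReal.ofReal (K * (b - a)))
    (θ : EuclideanSpace ℝ (Fin d)) (hθj : θ j ≠ 0) :
    μ {ω | Y ω = s ∧ (inner ℝ θ (X ω) : ℝ) = s} = 0 := by
  set m := Measure.map (fun ω (k : {k : Fin d // k ≠ j}) => X ω k)
      (μ.restrict {ω | Y ω = s}) with hm
  have hXmj : Measurable (fun ω (k : {k : Fin d // k ≠ j}) => X ω k) :=
    measurable_pi_lambda _ fun k => (measurable_pi_apply (k : Fin d)).comp ((WithLp.measurable_ofLp _ _).comp hX)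
  set c : ({k : Fin d // k ≠ j} → ℝ) → ℝ :=
    fun x => (s - ∑ k : {k : Fin d // k ≠ j}, θ k * x k) / θ j with hcdef
  have hc : Measurable c := by
    apply Measurable.div_const
    exact measurable_const.sub
      (Finset.measurable_sum _ fun k _ => (measurable_pi_apply k).const_mul _)
  have key : ∀ ω, ((inner ℝ θ (X ω) : ℝ) = s) ↔ X ω j = c (fun k => X ω k) := by
    intro ω
    have hsum : (inner ℝ θ (X ω) : ℝ)
        = θ j * X ω j + ∑ k : {k : Fin d // k ≠ j}, θ k * X ω k := by
      rw [PiLp.inner_apply]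
      simp only [RCLike.inner_apply, starRingEnd_apply, star_trivial]
      simp_rw [mul_comm ((X ω).ofLp _) (θ.ofLp _)]
      rw [← Finset.add_sum_erase _ _ (Finset.mem_univ j)]
      congr 1
      exact Finset.sum_subtype _ (by simp) _
    rw [hsum, hcdef]
    rw [eq_div_iff hθj]
    constructor <;> intro h <;> nlinarith [h]
  have main : ∀ ε : ℝ, 0 < ε →
      μ {ω | Y ω = s ∧ (inner ℝ θ (X ω) : ℝ) = s} ≤ ENNReal.ofReal (K * ε) := by
    intro ε hε
    set A : ℤ → Set ({k : Fin d // k ≠ j} → ℝ) :=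
      fun n => c ⁻¹' (Ioc ((n : ℝ) * ε) (((n : ℝ) + 1) * ε)) with hA
    have hAmeas : ∀ n, MeasurableSet (A n) := fun n => hc measurableSet_Ioc
    have hAdisj : Pairwise (Function.onFun Disjoint A) := by
      intro n k hnk
      refine Disjoint.preimage c ?_
      rw [Set.disjoint_left]
      rintro x ⟨h1, h2⟩ ⟨h3, h4⟩
      rcases lt_or_gt_of_ne hnk with h | h
      · have : (n : ℝ) + 1 ≤ (k : ℝ) := by exact_mod_cast h
        nlinarith
      · have : (k : ℝ) + 1 ≤ (n : ℝ) := by exact_mod_cast h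
        nlinarith
    have cover : {ω | Y ω = s ∧ (inner ℝ θ (X ω) : ℝ) = s} ⊆
        ⋃ n : ℤ, {ω | Y ω = s ∧ (fun k : {k : Fin d // k ≠ j} => X ω k) ∈ A n ∧
          X ω j ∈ Ioc ((n : ℝ) * ε) (((n : ℝ) + 1) * ε)} := by
      rintro ω ⟨hYω, hip⟩
      have hXj : X ω j = c (fun k => X ω k) := (key ω).mp hip
      set t := c (fun k : {k : Fin d // k ≠ j} => X ω k) with ht
      have htmem : t ∈ Ioc (((⌈t / ε⌉ - 1 : ℤ) : ℝ) * ε) ((((⌈t / ε⌉ - 1 : ℤ) : ℝ) + 1) * ε) := by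
        constructor
        · have h1 : ((⌈t / ε⌉ : ℝ) - 1) < t / ε := by
            have := Int.ceil_lt_add_one (t / ε)
            linarith
          push_cast
          calc ((⌈t / ε⌉ : ℝ) - 1) * ε < (t / ε) * ε := by
                exact mul_lt_mul_of_pos_right h1 hε
            _ = t := by field_simp
        · have h2 : t / ε ≤ (⌈t / ε⌉ : ℝ) := Int.le_ceil _
          push_cast
          have ht' : t = (t / ε) * ε := by field_simp
          nlinarith [mul_le_mul_of_nonneg_right h2 hε.le]
      refine Set.mem_iUnion.mpr ⟨⌈t / ε⌉ - 1, hYω, ?_, ?_⟩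
      · exact htmem
      · rw [hXj]; exact htmem
    calc μ {ω | Y ω = s ∧ (inner ℝ θ (X ω) : ℝ) = s}
        ≤ μ (⋃ n : ℤ, {ω | Y ω = s ∧ (fun k : {k : Fin d // k ≠ j} => X ω k) ∈ A n ∧
            X ω j ∈ Ioc ((n : ℝ) * ε) (((n : ℝ) + 1) * ε)}) := measure_mono cover
      _ ≤ ∑' n : ℤ, μ {ω | Y ω = s ∧ (fun k : {k : Fin d // k ≠ j} => X ω k) ∈ A n ∧
            X ω j ∈ Ioc ((n : ℝ) * ε) (((n : ℝ) + 1) * ε)} := measure_iUnion_le _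
      _ ≤ ∑' n : ℤ, ENNReal.ofReal (K * ε) * m (A n) := by
          refine ENNReal.tsum_le_tsum fun n => ?_
          rw [hdis (A n) (Ioc ((n : ℝ) * ε) (((n : ℝ) + 1) * ε)) (hAmeas n) measurableSet_Ioc]
          calc ∫⁻ x in A n, κj x (Ioc ((n : ℝ) * ε) (((n : ℝ) + 1) * ε)) ∂m
              ≤ ∫⁻ _ in A n, ENNReal.ofReal (K * ε) ∂m := by
                refine lintegral_mono fun x => ?_
                have h := hdens x ((n : ℝ) * ε) (((n : ℝ) + 1) * ε) (by nlinarith)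
                calc κj x (Ioc ((n : ℝ) * ε) (((n : ℝ) + 1) * ε))
                    ≤ ENNReal.ofReal (K * (((n : ℝ) + 1) * ε - (n : ℝ) * ε)) := h
                  _ = ENNReal.ofReal (K * ε) := by ring_nf
            _ = ENNReal.ofReal (K * ε) * m (A n) := by
                rw [setLIntegral_const]
      _ = ENNReal.ofReal (K * ε) * ∑' n : ℤ, m (A n) := ENNReal.tsum_mul_left
      _ = ENNReal.ofReal (K * ε) * m (⋃ n : ℤ, A n) := by rw [measure_iUnion hAdisj hAmeas]
      _ ≤ ENNReal.ofReal (K * ε) * 1 := by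
          refine mul_le_mul_right ?_ _
          calc m (⋃ n : ℤ, A n) ≤ m Set.univ := measure_mono (Set.subset_univ _)
            _ = (μ.restrict {ω | Y ω = s}) Set.univ := by
                rw [hm, Measure.map_apply hXmj MeasurableSet.univ, Set.preimage_univ]
            _ = μ {ω | Y ω = s} := Measure.restrict_apply_univ _
            _ ≤ 1 := prob_le_one
      _ = ENNReal.ofReal (K * ε) := mul_one _
  refine le_antisymm ?_ zero_le
  refine ENNReal.le_of_forall_pos_le_add fun η hη _ => ?_
  rw [zero_add]
  have h := main ((η : ℝ) / K) (div_pos hη hK)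
  calc μ {ω | Y ω = s ∧ (inner ℝ θ (X ω) : ℝ) = s}
      ≤ ENNReal.ofReal (K * ((η : ℝ) / K)) := h
    _ = (η : ENNReal) := by
        rw [mul_div_cancel₀ _ (ne_of_gt hK)]
        exact ENNReal.ofReal_coe_nnreal

set_option maxHeartbeats 1000000 in
/-- Gradient of the population soft-margin SVM risk: with bounded covariates and
bounded conditional densities of each coordinate `X̃ⱼ` given the remaining coordinates
and the label `Y = s` (phrased via disintegration kernels `κ`), the risk
`R(θ) = (λ/2)‖θ‖² + E[max(0, 1 - Yθᵀ X̃)]` is differentiable at every `θ` with all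
coordinates nonzero, with gradient `λθ - E[Y·1{YθᵀX̃ ≤ 1}·X̃]`. -/
theorem svm_risk_gradient
    {Ω : Type*} [MeasurableSpace Ω] (μ : Measure Ω) [IsProbabilityMeasure μ]
    {d : ℕ} (X : Ω → EuclideanSpace ℝ (Fin d)) (Y : Ω → ℝ)
    (hX : Measurable X) (hY : Measurable Y)
    (M K lam : ℝ) (hM : 0 < M) (hK : 0 < K) (hlam : 0 < lam)
    (hXbdd : ∀ᵐ ω ∂μ, ‖X ω‖ ≤ M)
    (hYsign : ∀ ω, Y ω = 1 ∨ Y ω = -1)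
    (κ : ℝ → (j : Fin d) → (({k : Fin d // k ≠ j} → ℝ) → Measure ℝ))
    (hdis : ∀ s : ℝ, (s = 1 ∨ s = -1) → ∀ j : Fin d,
      ∀ (A : Set ({k : Fin d // k ≠ j} → ℝ)) (B : Set ℝ),
        MeasurableSet A → MeasurableSet B →
        μ {ω | Y ω = s ∧ (fun k : {k : Fin d // k ≠ j} => X ω k) ∈ A ∧ X ω j ∈ B}
          = ∫⁻ x in A, κ s j x B
              ∂(Measure.map (fun ω (k : {k : Fin d // k ≠ j}) => X ω k)
                  (μ.restrict {ω | Y ω = s})))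
    (hdens : ∀ (s : ℝ) (j : Fin d) (x : {k : Fin d // k ≠ j} → ℝ), ∀ a b : ℝ, a ≤ b →
      κ s j x (Set.Ioc a b) ≤ ENNReal.ofReal (K * (b - a)))
    (R : EuclideanSpace ℝ (Fin d) → ℝ)
    (hR : ∀ θ, R θ = lam / 2 * ‖θ‖ ^ 2 + ∫ ω, max 0 (1 - Y ω * (inner ℝ θ (X ω) : ℝ)) ∂μ) :
    ∀ θ : EuclideanSpace ℝ (Fin d), (∀ j, θ j ≠ 0) →
      HasGradientAt R
        (lam • θ - ∫ ω, (Y ω * if Y ω * (inner ℝ θ (X ω) : ℝ) ≤ 1 then 1 else 0) • X ω ∂μ)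
        θ := by
  intro θ hθ
  have hYabs : ∀ ω, |Y ω| = 1 := by
    intro ω; rcases hYsign ω with h | h <;> rw [h] <;> norm_num
  have hip : Measurable fun ω => (inner ℝ θ (X ω) : ℝ) := measurable_const.inner hX
  -- the kink set is null
  have hnull : μ {ω | Y ω * (inner ℝ θ (X ω) : ℝ) = 1} = 0 := by
    by_cases hd : d = 0
    · subst hd
      have hzero : ∀ ω, (inner ℝ θ (X ω) : ℝ) = 0 := by
        intro ω; simp [PiLp.inner_apply]
      have : {ω | Y ω * (inner ℝ θ (X ω) : ℝ) = 1} = ∅ := by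
        ext ω; simp [hzero ω]
      rw [this, measure_empty]
    · have hj : 0 < d := Nat.pos_of_ne_zero hd
      set j : Fin d := ⟨0, hj⟩
      have h1 := svm_null_aux μ X hX Y hK j (κ 1 j) 1 (hdis 1 (Or.inl rfl) j)
        (hdens 1 j) θ (hθ j)
      have h2 := svm_null_aux μ X hX Y hK j (κ (-1) j) (-1) (hdis (-1) (Or.inr rfl) j)
        (hdens (-1) j) θ (hθ j)
      refine measure_mono_null ?_ (measure_union_null h1 h2)
      intro ω hω
      rcases hYsign ω with h | h
      · left; refine ⟨h, ?_⟩
        have := hω; rw [Set.mem_setOf_eq, h, one_mul] at this; exact this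
      · right; refine ⟨h, ?_⟩
        have := hω; rw [Set.mem_setOf_eq, h] at this; linarith
  -- the pointwise derivative
  set F' : Ω → (EuclideanSpace ℝ (Fin d) →L[ℝ] ℝ) := fun ω =>
    (if Y ω * (inner ℝ θ (X ω) : ℝ) ≤ 1 then -Y ω else 0) • innerSL ℝ (X ω) with hF'
  set g : Ω → EuclideanSpace ℝ (Fin d) := fun ω =>
    (if Y ω * (inner ℝ θ (X ω) : ℝ) ≤ 1 then -Y ω else 0) • X ω with hg
  have hcoef : Measurable fun ω => (if Y ω * (inner ℝ θ (X ω) : ℝ) ≤ 1 then -Y ω else 0) :=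
    Measurable.ite (measurableSet_le (hY.mul hip) measurable_const) hY.neg measurable_const
  have hcoef_le : ∀ ω, |if Y ω * (inner ℝ θ (X ω) : ℝ) ≤ 1 then -Y ω else 0| ≤ 1 := by
    intro ω; split
    · rw [abs_neg, hYabs ω]
    · simp
  have hgmeas : Measurable g := hcoef.smul hX
  have hgint : Integrable g μ := by
    refine (integrable_const M).mono' hgmeas.aestronglyMeasurable ?_
    filter_upwards [hXbdd] with ω hω
    rw [hg]
    simp only [norm_smul, Real.norm_eq_abs]
    calc |if Y ω * (inner ℝ θ (X ω) : ℝ) ≤ 1 then -Y ω else 0| * ‖X ω‖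
        ≤ 1 * M := by
          apply mul_le_mul (hcoef_le ω) hω (norm_nonneg _) one_pos.le
      _ = M := one_mul M
  have hF'meas : AEStronglyMeasurable F' μ := by
    apply AEStronglyMeasurable.smul hcoef.aestronglyMeasurable
    exact (innerSL ℝ).continuous.comp_aestronglyMeasurable hX.aestronglyMeasurable
  have h_diff : ∀ᵐ ω ∂μ, HasFDerivAt
      (fun x : EuclideanSpace ℝ (Fin d) => max 0 (1 - Y ω * (inner ℝ x (X ω) : ℝ)))
      (F' ω) θ := by
    have hae : ∀ᵐ ω ∂μ, Y ω * (inner ℝ θ (X ω) : ℝ) ≠ 1 := by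
      rw [ae_iff]; simpa using hnull
    filter_upwards [hae] with ω hω
    have hL0 : (fun x : EuclideanSpace ℝ (Fin d) => (inner ℝ x (X ω) : ℝ))
        = ⇑(innerSL ℝ (X ω)) := by
      funext x; simp only [innerSL_apply_apply]; exact (real_inner_comm x (X ω)).symm
    have hL : HasFDerivAt (fun x : EuclideanSpace ℝ (Fin d) => (inner ℝ x (X ω) : ℝ))
        (innerSL ℝ (X ω)) θ := by
      rw [hL0]; exact (innerSL ℝ (X ω)).hasFDerivAt
    have hcont : Continuous fun x : EuclideanSpace ℝ (Fin d) => Y ω * (inner ℝ x (X ω) : ℝ) :=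
      continuous_const.mul (continuous_id.inner continuous_const)
    rcases lt_or_gt_of_ne hω with hlt | hgt
    · have hd1 : HasFDerivAt
          (fun x : EuclideanSpace ℝ (Fin d) => 1 - Y ω * (inner ℝ x (X ω) : ℝ)) (F' ω) θ := by
        have h2 := (hL.const_mul (Y ω)).const_sub 1
        have : F' ω = -(Y ω • innerSL ℝ (X ω)) := by
          rw [hF']; simp only [if_pos hlt.le, neg_smul]
        rw [this]; exact h2
      refine hd1.congr_of_eventuallyEq ?_
      have hopen : IsOpen {x : EuclideanSpace ℝ (Fin d) | Y ω * (inner ℝ x (X ω) : ℝ) < 1} :=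
        isOpen_lt hcont continuous_const
      filter_upwards [hopen.mem_nhds hlt] with x hx
      exact max_eq_right (by linarith)
    · have hF'0 : F' ω = 0 := by
        rw [hF']; simp only [if_neg (not_le.mpr hgt), zero_smul]
      rw [hF'0]
      refine (hasFDerivAt_const (0 : ℝ) θ).congr_of_eventuallyEq ?_
      have hopen : IsOpen {x : EuclideanSpace ℝ (Fin d) | 1 < Y ω * (inner ℝ x (X ω) : ℝ)} :=
        isOpen_lt continuous_const hcont
      filter_upwards [hopen.mem_nhds hgt] with x hx
      exact max_eq_left (by linarith)
  have hF_meas : ∀ x ∈ Metric.ball θ 1, AEStronglyMeasurable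
      (fun ω => max 0 (1 - Y ω * (inner ℝ x (X ω) : ℝ))) μ := by
    intro x _
    exact (measurable_const.max
      (measurable_const.sub (hY.mul (measurable_const.inner hX)))).aestronglyMeasurable
  have hF_int : Integrable (fun ω => max 0 (1 - Y ω * (inner ℝ θ (X ω) : ℝ))) μ := by
    refine (integrable_const (1 + ‖θ‖ * M)).mono'
      ((measurable_const.max (measurable_const.sub (hY.mul hip))).aestronglyMeasurable) ?_
    filter_upwards [hXbdd] with ω hω
    have h1 : |(inner ℝ θ (X ω) : ℝ)| ≤ ‖θ‖ * ‖X ω‖ := abs_real_inner_le_norm θ (X ω)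
    have h2 : |Y ω * (inner ℝ θ (X ω) : ℝ)| ≤ ‖θ‖ * M := by
      rw [abs_mul, hYabs ω, one_mul]
      calc |(inner ℝ θ (X ω) : ℝ)| ≤ ‖θ‖ * ‖X ω‖ := h1
        _ ≤ ‖θ‖ * M := by
            apply mul_le_mul_of_nonneg_left hω (norm_nonneg θ)
    rw [Real.norm_eq_abs, abs_of_nonneg (le_max_left _ _)]
    have h3 : max 0 (1 - Y ω * (inner ℝ θ (X ω) : ℝ)) ≤ |1 - Y ω * (inner ℝ θ (X ω) : ℝ)| :=
      max_le (abs_nonneg _) (le_abs_self _)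
    calc max 0 (1 - Y ω * (inner ℝ θ (X ω) : ℝ)) ≤ |1 - Y ω * (inner ℝ θ (X ω) : ℝ)| := h3
      _ ≤ |(1 : ℝ)| + |Y ω * (inner ℝ θ (X ω) : ℝ)| := abs_sub _ _
      _ ≤ 1 + ‖θ‖ * M := by rw [abs_one]; linarith
  have h_lipsch : ∀ᵐ ω ∂μ, ∀ x ∈ Metric.ball θ (1 : ℝ),
      ‖max 0 (1 - Y ω * (inner ℝ x (X ω) : ℝ)) - max 0 (1 - Y ω * (inner ℝ θ (X ω) : ℝ))‖
        ≤ M * ‖x - θ‖ := by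
    filter_upwards [hXbdd] with ω hω x _
    set a := 1 - Y ω * (inner ℝ x (X ω) : ℝ) with ha
    set b := 1 - Y ω * (inner ℝ θ (X ω) : ℝ) with hb
    rw [Real.norm_eq_abs, max_comm 0 a, max_comm 0 b]
    calc |max a 0 - max b 0| ≤ |a - b| := abs_max_sub_max_le_abs a b 0
      _ = |Y ω * ((inner ℝ θ (X ω) : ℝ) - (inner ℝ x (X ω) : ℝ))| := by rw [ha, hb]; ring_nf
      _ = |(inner ℝ (θ - x) (X ω) : ℝ)| := by rw [abs_mul, hYabs ω, one_mul, inner_sub_left]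
      _ ≤ ‖θ - x‖ * ‖X ω‖ := abs_real_inner_le_norm _ _
      _ ≤ ‖x - θ‖ * M := by
          rw [norm_sub_rev]
          exact mul_le_mul_of_nonneg_left hω (norm_nonneg _)
      _ = M * ‖x - θ‖ := mul_comm _ _
  obtain ⟨hF'int, hderH⟩ := hasFDerivAt_integral_of_dominated_loc_of_lip'
    (μ := μ) (F := fun x ω => max 0 (1 - Y ω * (inner ℝ x (X ω) : ℝ))) (F' := F')
    (bound := fun _ => M) (Metric.ball_mem_nhds θ one_pos) hF_meas hF_int hF'meas h_lipsch (integrable_const M) h_diff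
  -- quadratic part
  have hqi := ((hasFDerivAt_id θ).inner ℝ (hasFDerivAt_id θ)).const_mul (lam / 2)
  simp only [real_inner_self_eq_norm_sq, id_eq] at hqi
  -- assemble
  rw [hasGradientAt_iff_hasFDerivAt]
  have hRfun : R = fun x : EuclideanSpace ℝ (Fin d) =>
      lam / 2 * ‖x‖ ^ 2 + ∫ ω, max 0 (1 - Y ω * (inner ℝ x (X ω) : ℝ)) ∂μ := funext hR
  rw [hRfun]
  convert hqi.add hderH using 1
  · rfl
  · rfl
  · rfl
  -- identify the derivative
  have hgh : (∫ ω, (Y ω * if Y ω * (inner ℝ θ (X ω) : ℝ) ≤ 1 then 1 else 0) • X ω ∂μ)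
      = -∫ ω, g ω ∂μ := by
    rw [← integral_neg]
    congr 1
    funext ω
    show _ = -((if Y ω * (inner ℝ θ (X ω) : ℝ) ≤ 1 then -Y ω else 0) • X ω)
    by_cases hc : Y ω * (inner ℝ θ (X ω) : ℝ) ≤ 1
    · rw [if_pos hc, if_pos hc]; simp
    · rw [if_neg hc, if_neg hc]; simp
  refine ContinuousLinearMap.ext fun y => ?_
  rw [InnerProductSpace.toDual_apply_apply]
  have hFy : (∫ ω, F' ω ∂μ) y = (inner ℝ (∫ ω, g ω ∂μ) y : ℝ) := by
    rw [ContinuousLinearMap.integral_apply hF'int y]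
    have : ∀ ω, F' ω y = (inner ℝ y (g ω) : ℝ) := by
      intro ω
      rw [hF', hg]
      simp only [ContinuousLinearMap.coe_smul', Pi.smul_apply, innerSL_apply_apply, smul_eq_mul]
      rw [real_inner_smul_right]
      congr 1
      exact real_inner_comm y (X ω)
    simp_rw [this]
    rw [integral_inner hgint y, real_inner_comm]
  simp only [ContinuousLinearMap.add_apply, ContinuousLinearMap.coe_smul', Pi.smul_apply,
    ContinuousLinearMap.coe_comp', Function.comp_apply, ContinuousLinearMap.prod_apply,
    ContinuousLinearMap.coe_id', id_eq, fderivInnerCLM_apply, smul_eq_mul]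
  rw [hFy, hgh]
  rw [inner_sub_left, real_inner_smul_left, inner_neg_left]
  have : (inner ℝ θ y : ℝ) = (inner ℝ y θ : ℝ) := real_inner_comm _ _
  ring_nf
  nlinarith [real_inner_comm θ y]
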